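/- For every m ≥ 1 there exists an integer a with 1 ≤ a ≤ 3^m and gcd(a, 3^m) = 1 such that all partial quotients of the continued fraction expansion of a/3^m are bounded by an absolute constant (in fact by 3). -/

import Mathlib

namespace ZarembaPow3

/-- 2×2 matrix of naturals `[[k, a], [b, c]]`. -/
structure M2 where
  k : ℕ
  a : ℕ
  b : ℕ
  c : ℕ
deriving DecidableEq

/-- Matrix multiplication. -/
def mmul (X Y : M2) : M2 :=
  ⟨X.k * Y.k + X.a * Y.b, X.k * Y.a + X.a * Y.c,
   X.b * Y.k + X.c * Y.b, X.b * Y.a + X.c * Y.c⟩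

/-- The product of the matrices `[[x,1],[1,0]]` over the letters of the word.
The entry `.k` is the continuant of the word, `.a` (resp. `.b`) the continuant of
the word with the last (resp. first) letter dropped. -/
def mats : List ℕ → M2
  | [] => ⟨1, 0, 0, 1⟩
  | x :: w => mmul ⟨x, 1, 1, 0⟩ (mats w)

lemma mmul_assoc (X Y Z : M2) : mmul (mmul X Y) Z = mmul X (mmul Y Z) := by
  cases X; cases Y; cases Z
  simp only [mmul, M2.mk.injEq]
  refine ⟨by ring, by ring, by ring, by ring⟩

lemma mats_append (u v : List ℕ) : mats (u ++ v) = mmul (mats u) (mats v) := by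
  induction u with
  | nil =>
      cases h : mats v
      simp [mats, mmul, h]
  | cons x u ih =>
      rw [List.cons_append]
      show mmul ⟨x, 1, 1, 0⟩ (mats (u ++ v)) = mmul (mmul ⟨x, 1, 1, 0⟩ (mats u)) (mats v)
      rw [ih, mmul_assoc]

/-- Transpose. -/
def tr (X : M2) : M2 := ⟨X.k, X.b, X.a, X.c⟩

lemma mats_reverse (w : List ℕ) : mats w.reverse = tr (mats w) := by
  induction w with
  | nil => rfl
  | cons x w ih =>
      rw [List.reverse_cons, mats_append, ih]
      show mmul (tr (mats w)) (mats [x]) = tr (mmul ⟨x, 1, 1, 0⟩ (mats w))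
      cases h : mats w
      simp only [mats, mmul, tr, M2.mk.injEq]
      refine ⟨by ring, by ring, by ring, by ring⟩

lemma mats_cons (x : ℕ) (w : List ℕ) :
    mats (x :: w) = ⟨x * (mats w).k + (mats w).b, x * (mats w).a + (mats w).c,
      (mats w).k, (mats w).a⟩ := by
  cases h : mats w
  simp [mats, mmul, h]

/-- determinant is `±1`. -/
lemma mats_det (w : List ℕ) :
    (mats w).a * (mats w).b + 1 = (mats w).k * (mats w).c ∨
    (mats w).k * (mats w).c + 1 = (mats w).a * (mats w).b := by
  induction w with
  | nil => left; simp [mats]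
  | cons x w ih =>
      rw [mats_cons]
      rcases ih with h | h
      · right; simp only; nlinarith [h]
      · left; simp only; nlinarith [h]

lemma mats_coprime (w : List ℕ) : Nat.gcd (mats w).b (mats w).k = 1 := by
  have hb : Nat.gcd (mats w).b (mats w).k ∣ (mats w).b := Nat.gcd_dvd_left _ _
  have hk : Nat.gcd (mats w).b (mats w).k ∣ (mats w).k := Nat.gcd_dvd_right _ _
  rcases mats_det w with h | h
  · have h1 : Nat.gcd (mats w).b (mats w).k ∣ (mats w).k * (mats w).c - (mats w).a * (mats w).b :=
      Nat.dvd_sub (Dvd.dvd.mul_right hk _) (Dvd.dvd.mul_left hb _)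
    have h2 : (mats w).k * (mats w).c - (mats w).a * (mats w).b = 1 := by omega
    rw [h2] at h1
    exact Nat.dvd_one.mp h1
  · have h1 : Nat.gcd (mats w).b (mats w).k ∣ (mats w).a * (mats w).b - (mats w).k * (mats w).c :=
      Nat.dvd_sub (Dvd.dvd.mul_left hb _) (Dvd.dvd.mul_right hk _)
    have h2 : (mats w).a * (mats w).b - (mats w).k * (mats w).c = 1 := by omega
    rw [h2] at h1
    exact Nat.dvd_one.mp h1

lemma k_pos' (w : List ℕ) (hw : ∀ x ∈ w, 1 ≤ x) : 1 ≤ (mats w).k := by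
  induction w with
  | nil => simp [mats]
  | cons x w ih =>
      rw [mats_cons]
      simp only
      have hx : 1 ≤ x := hw x (List.mem_cons_self)
      have hk : 1 ≤ (mats w).k := ih (fun y hy => hw y (List.mem_cons_of_mem x hy))
      nlinarith

lemma b_pos (u : List ℕ) (c : ℕ) (hw : ∀ x ∈ u, 1 ≤ x) (hc : 1 ≤ c) :
    1 ≤ (mats (u ++ [c])).b := by
  cases u with
  | nil =>
      simp only [List.nil_append]
      rw [show ([c] : List ℕ) = c :: [] from rfl, mats_cons]
      simp [mats]
  | cons x u =>
      rw [List.cons_append, mats_cons]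
      exact k_pos' _ (fun y hy => by
        rcases List.mem_append.mp hy with h | h
        · exact hw y (List.mem_cons_of_mem x h)
        · simp at h; omega)

lemma b_lt_k (u : List ℕ) (c : ℕ) (hw : ∀ x ∈ u, 1 ≤ x) (hc : 2 ≤ c) :
    (mats (u ++ [c])).b < (mats (u ++ [c])).k := by
  induction u with
  | nil =>
      simp only [List.nil_append]
      rw [show ([c] : List ℕ) = c :: [] from rfl, mats_cons]
      simp [mats]
      omega
  | cons x u ih =>
      rw [List.cons_append, mats_cons]
      simp only
      have hx : 1 ≤ x := hw x (List.mem_cons_self)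
      have hb : 1 ≤ (mats (u ++ [c])).b :=
        b_pos u c (fun y hy => hw y (List.mem_cons_of_mem x hy)) (by omega)
      nlinarith

open GenContFract Int

/-- The sequence of `of v` only depends on the fractional part of `v`. -/
lemma of_get?_eq_fract (v : ℚ) : ∀ n : ℕ,
    (GenContFract.of v).s.get? n = (GenContFract.of (Int.fract v)).s.get? n := by
  intro n
  cases n with
  | zero =>
      rcases eq_or_ne (Int.fract v) 0 with h | h
      · obtain ⟨z, hz⟩ : ∃ z : ℤ, v = (z : ℚ) := ⟨⌊v⌋, by
          have h2 := Int.fract_add_floor v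
          rw [h, zero_add] at h2
          exact h2.symm⟩
        rw [hz, Int.fract_intCast, show ((0 : ℚ)) = ((0 : ℤ) : ℚ) by norm_num,
          of_s_of_int, of_s_of_int]
      · have h2 : Int.fract (Int.fract v) ≠ 0 := by rwa [Int.fract_fract]
        have e1 : (GenContFract.of v).s.get? 0 = some ⟨1, ⌊(Int.fract v)⁻¹⌋⟩ := of_s_head h
        have e2 : (GenContFract.of (Int.fract v)).s.get? 0
            = some ⟨1, ⌊(Int.fract (Int.fract v))⁻¹⌋⟩ := of_s_head h2
        rw [e1, e2, Int.fract_fract]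
  | succ n =>
      rw [of_s_succ, of_s_succ, Int.fract_fract]

/-- Sequence of `of` of a natural number (as a rational) is trivial. -/
lemma of_natCast_s (c : ℕ) (n : ℕ) : (GenContFract.of ((c : ℚ))).s.get? n = none := by
  rw [show ((c : ℚ)) = ((c : ℤ) : ℚ) by push_cast; ring, of_s_of_int]
  rfl

/-- Main bridge: the partial denominators of `b/k` for the word `u ++ [c]` are among
the letters of the word; in particular they are at most `3`. -/
lemma bridge : ∀ (u : List ℕ) (c : ℕ), (∀ x ∈ u, 1 ≤ x ∧ x ≤ 3) → 2 ≤ c → c ≤ 3 →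
    ∀ (n : ℕ) (p : Pair ℚ),
      (GenContFract.of (((mats (u ++ [c])).b : ℚ) / ((mats (u ++ [c])).k : ℚ))).s.get? n = some p →
      p.b ≤ 3 := by
  intro u
  induction u with
  | nil =>
      intro c _ hc2 hc3 n p hp
      have hm : mats ([] ++ [c]) = ⟨c, 1, 1, 0⟩ := by
        simp [mats, mmul]
      rw [hm] at hp
      simp only at hp
      have hcQ : (1 : ℚ) ≤ (c : ℚ) := by exact_mod_cast le_trans (by norm_num) hc2
      have hcpos : (0 : ℚ) < (c : ℚ) := by linarith
      set v : ℚ := ((1 : ℕ) : ℚ) / ((c : ℕ) : ℚ) with hv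
      have hv0 : 0 < v := by
        rw [hv]; exact div_pos (by norm_num) hcpos
      have hv1 : v < 1 := by
        rw [hv, div_lt_one hcpos]
        exact_mod_cast show (1 : ℕ) < c by omega
      have hfr : Int.fract v = v := Int.fract_eq_self.mpr ⟨le_of_lt hv0, hv1⟩
      have hinv : (Int.fract v)⁻¹ = (c : ℚ) := by
        rw [hfr, hv]
        push_cast
        rw [one_div, inv_inv]
      cases n with
      | zero =>
          have hne : Int.fract v ≠ 0 := by rw [hfr]; exact ne_of_gt hv0
          have e1 : (GenContFract.of v).s.get? 0 = some ⟨1, ⌊(Int.fract v)⁻¹⌋⟩ := of_s_head hne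
          rw [e1] at hp
          have hpv : p = ⟨1, (⌊(Int.fract v)⁻¹⌋ : ℚ)⟩ := (Option.some_inj.mp hp).symm
          rw [hpv]
          simp only [hinv, Int.floor_natCast]
          exact_mod_cast hc3
      | succ n =>
          rw [of_s_succ] at hp
          rw [hinv, of_natCast_s] at hp
          exact absurd hp (by simp)
  | cons x u ih =>
      intro c hw hc2 hc3 n p hp
      set w' := u ++ [c] with hww
      have hm : mats ((x :: u) ++ [c])
          = ⟨x * (mats w').k + (mats w').b, x * (mats w').a + (mats w').c,
             (mats w').k, (mats w').a⟩ := by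
        rw [List.cons_append, mats_cons]
      set k' : ℕ := (mats w').k with hk'
      set b' : ℕ := (mats w').b with hb'
      have hletters : ∀ y ∈ u, 1 ≤ y := fun y hy => (hw y (List.mem_cons_of_mem x hy)).1
      have hx1 : 1 ≤ x := (hw x (List.mem_cons_self)).1
      have hx3 : x ≤ 3 := (hw x (List.mem_cons_self)).2
      have hk'pos : 1 ≤ k' := by
        rw [hk', hww]
        exact k_pos' _ (fun y hy => by
          rcases List.mem_append.mp hy with h | h
          · exact hletters y h
          · simp at h; omega)
      have hb'k' : b' < k' := by
        rw [hb', hk', hww]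
        exact b_lt_k u c hletters hc2
      have hb'pos : 1 ≤ b' := by
        rw [hb', hww]
        exact b_pos u c hletters (by omega)
      rw [hm] at hp
      simp only at hp
      set K : ℕ := x * k' + b' with hK
      have hKpos : 0 < K := by rw [hK]; nlinarith
      have hkK : k' < K := by rw [hK]; nlinarith
      have hKQ : (0 : ℚ) < (K : ℚ) := by exact_mod_cast hKpos
      have hkQ : (0 : ℚ) < (k' : ℚ) := by exact_mod_cast hk'pos
      set v : ℚ := (k' : ℚ) / (K : ℚ) with hv
      have hv0 : 0 < v := by rw [hv]; positivity
      have hv1 : v < 1 := by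
        rw [hv, div_lt_one hKQ]
        exact_mod_cast hkK
      have hfr : Int.fract v = v := Int.fract_eq_self.mpr ⟨le_of_lt hv0, hv1⟩
      have hne : Int.fract v ≠ 0 := by rw [hfr]; exact ne_of_gt hv0
      have hinv : (Int.fract v)⁻¹ = ((x : ℤ) : ℚ) + (b' : ℚ) / (k' : ℚ) := by
        rw [hfr, hv, inv_div, hK]
        push_cast
        field_simp
      have hfrac0 : (0 : ℚ) ≤ (b' : ℚ) / (k' : ℚ) := by positivity
      have hfrac1 : (b' : ℚ) / (k' : ℚ) < 1 := by
        rw [div_lt_one hkQ]; exact_mod_cast hb'k'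
      cases n with
      | zero =>
          have e1 : (GenContFract.of v).s.get? 0 = some ⟨1, ⌊(Int.fract v)⁻¹⌋⟩ := of_s_head hne
          rw [e1] at hp
          have hpv : p = ⟨1, (⌊(Int.fract v)⁻¹⌋ : ℚ)⟩ := (Option.some_inj.mp hp).symm
          have hfl : ⌊(Int.fract v)⁻¹⌋ = (x : ℤ) := by
            rw [hinv, Int.floor_intCast_add]
            have h0 : ⌊(b' : ℚ) / (k' : ℚ)⌋ = 0 :=
              Int.floor_eq_zero_iff.mpr ⟨hfrac0, hfrac1⟩
            omega
          rw [hpv]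
          simp only [hfl]
          exact_mod_cast hx3
      | succ n =>
          rw [of_s_succ] at hp
          rw [of_get?_eq_fract] at hp
          have hfr2 : Int.fract ((Int.fract v)⁻¹) = (b' : ℚ) / (k' : ℚ) := by
            rw [hinv, Int.fract_intCast_add]
            exact Int.fract_eq_self.mpr ⟨hfrac0, hfrac1⟩
          rw [hfr2] at hp
          exact ih c (fun y hy => hw y (List.mem_cons_of_mem x hy)) hc2 hc3 n p hp

/-- The key invariant: there is a word `2 :: u ++ [2]` (all letters in `{1,2,3}`)
whose continuant is `3 ^ j`. -/
def Q (j : ℕ) : Prop :=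
  ∃ u : List ℕ, (∀ x ∈ u, 1 ≤ x ∧ x ≤ 3) ∧ (mats ((2 :: u) ++ [2])).k = 3 ^ j

lemma glue_eq (u g : List ℕ) :
    (2 :: (u ++ g ++ u.reverse)) ++ [2]
      = (2 :: u) ++ g ++ (2 :: u).reverse := by
  simp [List.reverse_cons]

lemma key_step (j : ℕ) (h : Q j) (g : List ℕ) (hg : ∀ x ∈ g, 1 ≤ x ∧ x ≤ 3)
    (G : M2) (hG : mats g = G) (t : ℕ)
    (hform : ∀ X : M2, (mmul X (mmul G (tr X))).k
        = t * (2 * X.k + X.a) * (2 * X.k + X.a))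
    : ∃ u : List ℕ, (∀ x ∈ u, 1 ≤ x ∧ x ≤ 3) ∧
        (mats ((2 :: u) ++ [2])).k = t * (3 ^ j * 3 ^ j) := by
  obtain ⟨u, hu, hk⟩ := h
  refine ⟨u ++ g ++ u.reverse, ?_, ?_⟩
  · intro x hx
    rcases List.mem_append.mp hx with hx | hx
    · rcases List.mem_append.mp hx with hx | hx
      · exact hu x hx
      · exact hg x hx
    · exact hu x (List.mem_reverse.mp hx)
  · rw [glue_eq, mats_append, mats_append, mats_reverse, hG, mmul_assoc]
    have h2ka : 2 * (mats (2 :: u)).k + (mats (2 :: u)).a = 3 ^ j := by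
      have hthis := hk
      rw [mats_append] at hthis
      have hm2 : mats [2] = ⟨2, 1, 1, 0⟩ := by
        rw [show ([2] : List ℕ) = 2 :: [] from rfl, mats_cons]; simp [mats]
      rw [hm2] at hthis
      cases hmm : mats (2 :: u)
      rw [hmm] at hthis
      simp only [mmul] at hthis ⊢
      omega
    rw [hform (mats (2 :: u)), h2ka, mul_assoc]

lemma key_even (j : ℕ) (h : Q j) : Q (2 * j) := by
  obtain ⟨u, hu, hk⟩ := key_step j h [1, 3] (by decide) ⟨4, 1, 3, 1⟩ (by decide) 1
    (by
      intro X
      cases X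
      simp only [mmul, tr]
      ring)
  refine ⟨u, hu, ?_⟩
  rw [hk, one_mul, ← pow_add, two_mul]

lemma key_odd (j : ℕ) (h : Q j) : Q (2 * j + 1) := by
  obtain ⟨u, hu, hk⟩ := key_step j h [1, 1, 2, 2] (by decide) ⟨12, 5, 7, 3⟩ (by decide) 3
    (by
      intro X
      cases X
      simp only [mmul, tr]
      ring)
  refine ⟨u, hu, ?_⟩
  rw [hk, ← pow_add, two_mul, pow_succ, mul_comm]

lemma Q4 : Q 4 := ⟨[1, 1, 1, 1, 2], by decide, by decide⟩
lemma Q5 : Q 5 := ⟨[1, 1, 1, 3, 1, 2], by decide, by decide⟩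
lemma Q6 : Q 6 := ⟨[1, 1, 2, 1, 3, 1, 3], by decide, by decide⟩
lemma Q7 : Q 7 := ⟨[1, 2, 2, 1, 2, 3, 2, 1], by decide, by decide⟩

lemma Qall : ∀ j : ℕ, 4 ≤ j → Q j := by
  intro j
  induction j using Nat.strong_induction_on with
  | _ j IH =>
    intro hj
    by_cases h8 : j < 8
    · interval_cases j
      · exact Q4
      · exact Q5
      · exact Q6
      · exact Q7
    · push_neg at h8
      have h4 : 4 ≤ j / 2 := by omega
      have hlt : j / 2 < j := by omega
      have hQ : Q (j / 2) := IH (j / 2) hlt h4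
      rcases Nat.even_or_odd j with he | ho
      · obtain ⟨r, hr⟩ := he
        have hj2 : j = 2 * (j / 2) := by omega
        rw [hj2]
        exact key_even _ hQ
      · obtain ⟨r, hr⟩ := ho
        have hj2 : j = 2 * (j / 2) + 1 := by omega
        rw [hj2]
        exact key_odd _ hQ

/-- For every `m ≥ 1`, there is a word `u ++ [2]` with letters in `{1,2,3}`
and continuant `3 ^ m`. -/
lemma exists_word (m : ℕ) (hm : 1 ≤ m) :
    ∃ u : List ℕ, (∀ x ∈ u, 1 ≤ x ∧ x ≤ 3) ∧ (mats (u ++ [2])).k = 3 ^ m := by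
  by_cases h4 : 4 ≤ m
  · obtain ⟨u, hu, hk⟩ := Qall m h4
    exact ⟨2 :: u, by
      intro x hx
      rcases List.mem_cons.mp hx with h | h
      · omega
      · exact hu x h, hk⟩
  · interval_cases m
    · exact ⟨[1], by decide, by decide⟩
    · exact ⟨[1, 3], by decide, by decide⟩
    · exact ⟨[3, 2, 1], by decide, by decide⟩

end ZarembaPow3

/-- Niederreiter: Zaremba's conjecture with constant 3 for powers of 3.
For every `m ≥ 1` there is `a` with `1 ≤ a ≤ 2^m`, `gcd(a, 2^m) = 1`, such that
all partial quotients of the continued fraction expansion of `a / 3^m` are at most `3`. -/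
theorem zaremba_pow_three (m : ℕ) (hm : 1 ≤ m) :
    ∃ a : ℕ, 1 ≤ a ∧ a ≤ 3 ^ m ∧ Nat.gcd a (3 ^ m) = 1 ∧
      ∀ (n : ℕ) (c : ℚ),
        (GenContFract.of ((a : ℚ) / (3 ^ m : ℚ))).partDens.get? n = some c → c ≤ 3 := by
  classical
  obtain ⟨u, hu, hk⟩ := ZarembaPow3.exists_word m hm
  set w : List ℕ := u ++ [2] with hw
  set a : ℕ := (ZarembaPow3.mats w).b with ha
  have hletters : ∀ y ∈ u, 1 ≤ y := fun y hy => (hu y hy).1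
  have ha1 : 1 ≤ a := ZarembaPow3.b_pos u 2 hletters (by norm_num)
  have hak : a < (ZarembaPow3.mats w).k := ZarembaPow3.b_lt_k u 2 hletters (by norm_num)
  refine ⟨a, ha1, ?_, ?_, ?_⟩
  · rw [← hk]; exact le_of_lt hak
  · have := ZarembaPow3.mats_coprime w
    rw [hk] at this
    exact this
  · intro n c hc
    have hcast : ((a : ℚ) / (3 ^ m : ℚ))
        = (((ZarembaPow3.mats w).b : ℚ) / (((ZarembaPow3.mats w).k : ℕ) : ℚ)) := by
      rw [hk]
      push_cast
      ring
    rw [hcast] at hc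
    obtain ⟨gp, hgp, hgpb⟩ := GenContFract.exists_s_b_of_partDen hc
    have := ZarembaPow3.bridge u 2 hu (by norm_num) (by norm_num) n gp hgp
    rw [hgpb] at this
    exact this
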